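/- For all natural numbers n and m with m < n, and all real numbers a and b, the sum over k from 0 to n of (-1)^(n-k) * C(n,k) * (a + k*b)^m equals 0. -/

import Mathlib

open Finset

lemma fwdDiff_pow_eq_zero (h : ℝ) : ∀ m n : ℕ, m < n →
    (fwdDiff h)^[n] (fun x : ℝ => x ^ m) = 0 := by
  intro m
  induction m using Nat.strong_induction_on with
  | _ m IH =>
    intro n hn
    obtain ⟨n', rfl⟩ : ∃ n', n = n' + 1 := ⟨n - 1, (Nat.succ_pred_eq_of_pos (Nat.pos_of_ne_zero (by omega))).symm⟩
    rw [Function.iterate_succ_apply]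
    have hdiff : fwdDiff h (fun x : ℝ => x ^ m)
        = fun x : ℝ => ∑ j ∈ range m, (x ^ j * h ^ (m - j) * m.choose j) := by
      funext x
      rw [fwdDiff, add_pow]
      rw [Finset.sum_range_succ]
      simp
    rw [hdiff]
    have : (fun x : ℝ => ∑ j ∈ range m, (x ^ j * h ^ (m - j) * m.choose j))
        = ∑ j ∈ range m, (fun x : ℝ => (h ^ (m - j) * m.choose j) * x ^ j) := by
      funext x; simp [Finset.sum_apply]; congr 1; funext j; ring
    rw [this, fwdDiff_iter_finset_sum]
    apply Finset.sum_eq_zero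
    intro j hj
    rw [mem_range] at hj
    have : (fun x : ℝ => (h ^ (m - j) * m.choose j) * x ^ j)
        = (h ^ (m - j) * (m.choose j : ℝ)) • (fun x : ℝ => x ^ j) := by
      funext x; simp [smul_eq_mul]
    rw [this, fwdDiff_iter_const_smul, IH j hj n' (by omega), smul_zero]

theorem boole_pow_zero (n m : ℕ) (hm : m < n) (a b : ℝ) :
    ∑ k ∈ Finset.range (n + 1), (-1 : ℝ)^(n - k) * (n.choose k) * (a + k * b)^m = 0 := by
  have key := fwdDiff_iter_eq_sum_shift b (fun x : ℝ => x ^ m) n a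
  rw [fwdDiff_pow_eq_zero b m n hm] at key
  have : (0 : ℝ) = ∑ k ∈ range (n + 1),
      ((-1 : ℤ) ^ (n - k) * n.choose k) • (a + k • b) ^ m := key
  rw [this]
  apply Finset.sum_congr rfl
  intro k _
  rw [zsmul_eq_mul, nsmul_eq_mul]
  push_cast
  ring
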